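/- Let Ω ⊆ ℝ^n be open and p : Ω → [1,∞) Borel measurable. The following are equivalent: (i) ρ_p is right-continuous on L^{p(·)}(Ω), i.e., for every u ∈ L^{p(·)}(Ω) and λ₀ > 0, ρ_p(λu) → ρ_p(λ₀u) as λ → λ₀ from the right; (ii) the essential supremum of p over Ω is finite; (iii) ρ_p satisfies the Δ₂-property, i.e., for every sequence (u_k) of measurable functions, ρ_p(u_k) → 0 implies ρ_p(2u_k) → 0. -/

import Mathlib

open Filter Topology ENNReal MeasureTheory

/-- The modular `ρ_p(u) = ∫_Ω |u(x)|^{p(x)} dx` on measurable real functions on `Ω ⊆ ℝ^n`. -/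
noncomputable def lpModular {n : ℕ} (Ω : Set (EuclideanSpace ℝ (Fin n)))
    (p : EuclideanSpace ℝ (Fin n) → ℝ) (u : EuclideanSpace ℝ (Fin n) → ℝ) : ℝ≥0∞ :=
  ∫⁻ x in Ω, ENNReal.ofReal (|u x| ^ p x)

/-- `X_ρ`, the modular vector space associated to a modular `ρ`. -/
def modularSet {X : Type*} [AddCommGroup X] [Module ℝ X] (ρ : X → ℝ≥0∞) : Set X :=
  {v : X | ∃ l : ℝ, 0 < l ∧ ρ (l • v) < ⊤}

open Set

theorem aux_cont {α : Type*} [MeasurableSpace α] (μ : Measure α) (T : Set α) (hT : MeasurableSet T)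
    (hTfin : μ T ≠ ⊤) (q : α → ℝ) (hq : Measurable q) (B : ℝ)
    (hqB : ∀ x ∈ T, 1 ≤ q x ∧ q x ≤ B) (c₀ : ℝ) (hc₀ : 0 < c₀) :
    ContinuousAt (fun c : ℝ => ∫⁻ x in T, ENNReal.ofReal (c ^ q x) ∂μ) c₀ := by
  have h := MeasureTheory.tendsto_lintegral_filter_of_dominated_convergence
    (μ := μ.restrict T) (l := 𝓝 c₀)
    (F := fun c x => ENNReal.ofReal (c ^ q x)) (f := fun x => ENNReal.ofReal (c₀ ^ q x))
    (fun _ => ENNReal.ofReal ((c₀ + 1) ^ B))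
    (Eventually.of_forall fun c => (measurable_const.pow hq).ennreal_ofReal)
    ?_ ?_ ?_
  · exact h
  · filter_upwards [Ioo_mem_nhds hc₀ (lt_add_one c₀)] with c hc
    filter_upwards [ae_restrict_mem hT] with x hx
    have h1 : c ^ q x ≤ (c₀ + 1) ^ q x :=
      Real.rpow_le_rpow hc.1.le hc.2.le (le_trans zero_le_one (hqB x hx).1)
    have h2 : (c₀ + 1) ^ q x ≤ (c₀ + 1) ^ B :=
      Real.rpow_le_rpow_of_exponent_le (by linarith) (hqB x hx).2
    exact ENNReal.ofReal_le_ofReal (h1.trans h2)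
  · rw [setLIntegral_const]
    exact ENNReal.mul_ne_top ENNReal.ofReal_ne_top hTfin
  · refine Eventually.of_forall fun x => ?_
    have : ContinuousAt (fun c : ℝ => c ^ q x) c₀ :=
      Real.continuousAt_rpow_const c₀ (q x) (Or.inl hc₀.ne')
    exact (ENNReal.continuous_ofReal.continuousAt.comp this)

theorem aux_exists_c {α : Type*} [MeasurableSpace α] (μ : Measure α) (T : Set α)
    (hT : MeasurableSet T) (hTpos : 0 < μ T) (hTfin : μ T ≠ ⊤)
    (q : α → ℝ) (hq : Measurable q) (B : ℝ)
    (hqB : ∀ x ∈ T, 1 ≤ q x ∧ q x ≤ B) (ε : ℝ≥0∞) (hε0 : 0 < ε) (hε1 : ε ≤ 1) :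
    ∃ c : ℝ, 0 < c ∧ ∫⁻ x in T, ENNReal.ofReal (c ^ q x) ∂μ = ε := by
  set g : ℝ → ℝ≥0∞ := fun c => ∫⁻ x in T, ENNReal.ofReal (c ^ q x) ∂μ with hg
  set t : ℝ := (μ T).toReal with hts
  have ht : 0 < t := ENNReal.toReal_pos hTpos.ne' hTfin
  have hμT : μ T = ENNReal.ofReal t := (ENNReal.ofReal_toReal hTfin).symm
  have hεtop : ε ≠ ⊤ := ne_top_of_le_ne_top one_ne_top hε1
  have hεt : 0 < ε.toReal := ENNReal.toReal_pos hε0.ne' hεtop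
  set c₀ : ℝ := min 1 (ε.toReal / (2 * t)) with hc₀s
  set c₁ : ℝ := max 1 t⁻¹ with hc₁s
  have hc₀pos : 0 < c₀ := lt_min one_pos (by positivity)
  have hc₀le1 : c₀ ≤ 1 := min_le_left _ _
  have hc₁ge1 : (1:ℝ) ≤ c₁ := le_max_left _ _
  have hc₀c₁ : c₀ ≤ c₁ := hc₀le1.trans hc₁ge1
  have hgc₀ : g c₀ ≤ ε := by
    have hmono : ∀ᵐ x ∂(μ.restrict T),
        ENNReal.ofReal (c₀ ^ q x) ≤ ENNReal.ofReal c₀ := by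
      filter_upwards [ae_restrict_mem hT] with x hx
      refine ENNReal.ofReal_le_ofReal ?_
      calc c₀ ^ q x ≤ c₀ ^ (1:ℝ) :=
            Real.rpow_le_rpow_of_exponent_ge hc₀pos hc₀le1 (hqB x hx).1
        _ = c₀ := Real.rpow_one c₀
    calc g c₀ ≤ ∫⁻ _ in T, ENNReal.ofReal c₀ ∂μ := lintegral_mono_ae hmono
      _ = ENNReal.ofReal c₀ * μ T := setLIntegral_const T _
      _ ≤ ENNReal.ofReal (ε.toReal / (2 * t)) * ENNReal.ofReal t := by
          rw [hμT]
          exact mul_le_mul_of_nonneg_right (ENNReal.ofReal_le_ofReal (min_le_right _ _)) zero_le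
      _ = ENNReal.ofReal (ε.toReal / (2 * t) * t) := by
          rw [← ENNReal.ofReal_mul (by positivity)]
      _ = ENNReal.ofReal (ε.toReal / 2) := by
          congr 1; field_simp
      _ ≤ ENNReal.ofReal ε.toReal := ENNReal.ofReal_le_ofReal (by linarith)
      _ = ε := ENNReal.ofReal_toReal hεtop
  have hgc₁ : ε ≤ g c₁ := by
    have hmono : ∀ᵐ x ∂(μ.restrict T),
        ENNReal.ofReal t⁻¹ ≤ ENNReal.ofReal (c₁ ^ q x) := by
      filter_upwards [ae_restrict_mem hT] with x hx
      refine ENNReal.ofReal_le_ofReal ?_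
      calc t⁻¹ ≤ c₁ := le_max_right _ _
        _ = c₁ ^ (1:ℝ) := (Real.rpow_one c₁).symm
        _ ≤ c₁ ^ q x := Real.rpow_le_rpow_of_exponent_le hc₁ge1 (hqB x hx).1
    calc ε ≤ 1 := hε1
      _ = ENNReal.ofReal (t⁻¹ * t) := by
          rw [inv_mul_cancel₀ ht.ne', ENNReal.ofReal_one]
      _ = ENNReal.ofReal t⁻¹ * μ T := by
          rw [hμT, ← ENNReal.ofReal_mul (by positivity)]
      _ = ∫⁻ _ in T, ENNReal.ofReal t⁻¹ ∂μ := (setLIntegral_const T _).symm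
      _ ≤ g c₁ := lintegral_mono_ae hmono
  have hcont : ContinuousOn g (Icc c₀ c₁) := fun c hc =>
    (aux_cont μ T hT hTfin q hq B hqB c (lt_of_lt_of_le hc₀pos hc.1)).continuousWithinAt
  have := intermediate_value_Icc hc₀c₁ hcont
  obtain ⟨c, hc, hgc⟩ := this ⟨hgc₀, hgc₁⟩
  exact ⟨c, lt_of_lt_of_le hc₀pos hc.1, hgc⟩

-- chunk of finite positive measure
theorem aux_chunk {n : ℕ} (S : Set (EuclideanSpace ℝ (Fin n))) (hS : MeasurableSet S)
    (hpos : 0 < volume S) :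
    ∃ T, MeasurableSet T ∧ T ⊆ S ∧ 0 < volume T ∧ volume T ≠ ⊤ := by
  have : ∃ m : ℕ, 0 < volume (S ∩ Metric.ball 0 m) := by
    by_contra h
    push_neg at h
    have hcov : S ⊆ ⋃ m : ℕ, S ∩ Metric.ball 0 m := by
      intro x hx
      obtain ⟨m, hm⟩ := exists_nat_gt ‖x‖
      exact mem_iUnion.2 ⟨m, hx, by simpa [mem_ball_zero_iff] using hm⟩
    have : volume S ≤ 0 := by
      calc volume S ≤ volume (⋃ m : ℕ, S ∩ Metric.ball 0 m) := measure_mono hcov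
        _ = 0 := measure_iUnion_null fun m => le_antisymm (h m) zero_le
    exact absurd (le_antisymm this zero_le) hpos.ne'
  obtain ⟨m, hm⟩ := this
  exact ⟨S ∩ Metric.ball 0 m, hS.inter measurableSet_ball, inter_subset_left, hm,
    (lt_of_le_of_lt (measure_mono inter_subset_right) measure_ball_lt_top).ne⟩

-- slab lemma
theorem aux_slab {n : ℕ} (Ω : Set (EuclideanSpace ℝ (Fin n))) (hΩ : IsOpen Ω)
    (p : EuclideanSpace ℝ (Fin n) → ℝ) (hpm : Measurable p)
    (hub : ¬ ∃ M : ℝ, ∀ᵐ x ∂(volume.restrict Ω), p x ≤ M) (m : ℕ) :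
    ∃ j : ℕ, m ≤ j ∧
      0 < volume {x | x ∈ Ω ∧ (j : ℝ) ≤ p x ∧ p x ≤ (j : ℝ) + 1} := by
  push_neg at hub
  have h := hub m
  unfold Filter.Eventually at h
  have hpos : 0 < (volume.restrict Ω) {x | ¬ p x ≤ (m : ℝ)} := by
    rcases eq_or_lt_of_le (zero_le : 0 ≤ (volume.restrict Ω) {x | ¬ p x ≤ (m : ℝ)}) with h'|h'
    · exact absurd ((MeasureTheory.ae_iff (p := fun x => p x ≤ (m:ℝ))).2 h'.symm) (Filter.not_eventually.2 (h.mono fun x hx => not_le.2 hx))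
    · exact h'
  rw [Measure.restrict_apply₀' (hΩ.measurableSet.nullMeasurableSet)] at hpos
  by_contra hcon
  push_neg at hcon
  set A : Set (EuclideanSpace ℝ (Fin n)) := {x | ¬ p x ≤ (m:ℝ)} ∩ Ω with hA
  have hcov : A ⊆ ⋃ j : ℕ, ⋃ (_ : m ≤ j), {x | x ∈ Ω ∧ (j:ℝ) ≤ p x ∧ p x ≤ (j:ℝ) + 1} := by
    rintro x ⟨hx1, hx2⟩
    simp only [mem_setOf_eq, not_le] at hx1
    have hx0 : 0 ≤ p x := le_trans (Nat.cast_nonneg m) hx1.le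
    refine mem_iUnion.2 ⟨⌊p x⌋₊, mem_iUnion.2 ⟨?_, hx2, ?_, ?_⟩⟩
    · exact Nat.le_floor hx1.le
    · exact Nat.floor_le hx0
    · exact (Nat.lt_floor_add_one (p x)).le
  have : volume A = 0 := by
    refine le_antisymm ?_ zero_le
    calc volume A ≤ volume (⋃ j : ℕ, ⋃ (_ : m ≤ j),
          {x | x ∈ Ω ∧ (j:ℝ) ≤ p x ∧ p x ≤ (j:ℝ) + 1}) := measure_mono hcov
      _ = 0 := by
          refine measure_iUnion_null fun j => measure_iUnion_null fun hj => ?_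
          exact le_antisymm (hcon j hj) zero_le
  exact absurd this hpos.ne'

/-- Combined: a good set in a slab `[j, j+1]` with exact integral `ε`. -/
theorem aux_good {n : ℕ} (Ω : Set (EuclideanSpace ℝ (Fin n))) (hΩ : IsOpen Ω)
    (p : EuclideanSpace ℝ (Fin n) → ℝ) (hpm : Measurable p)
    (hub : ¬ ∃ M : ℝ, ∀ᵐ x ∂(volume.restrict Ω), p x ≤ M) (m : ℕ) (ε : ℝ≥0∞)
    (hε0 : 0 < ε) (hε1 : ε ≤ 1) :
    ∃ (j : ℕ) (T : Set (EuclideanSpace ℝ (Fin n))) (c : ℝ),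
      m ≤ j ∧ MeasurableSet T ∧ T ⊆ Ω ∧
      (∀ x ∈ T, (j : ℝ) ≤ p x ∧ p x ≤ (j : ℝ) + 1) ∧ 0 < c ∧
      ∫⁻ x in T, ENNReal.ofReal (c ^ p x) = ε := by
  obtain ⟨j, hj, hpos⟩ := aux_slab Ω hΩ p hpm hub (max m 1)
  set S := {x | x ∈ Ω ∧ (j:ℝ) ≤ p x ∧ p x ≤ (j:ℝ) + 1} with hSdef
  have hSmeas : MeasurableSet S := by
    have : S = Ω ∩ (p ⁻¹' Set.Ici (j:ℝ)) ∩ (p ⁻¹' Set.Iic ((j:ℝ)+1)) := by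
      ext x; simp [hSdef, and_assoc]; tauto
    rw [this]
    exact (hΩ.measurableSet.inter (hpm measurableSet_Ici)).inter (hpm measurableSet_Iic)
  obtain ⟨T, hTmeas, hTsub, hTpos, hTfin⟩ := aux_chunk S hSmeas hpos
  have hj1 : (1:ℝ) ≤ (j:ℝ) := by exact_mod_cast (le_max_right m 1).trans hj
  have hqB : ∀ x ∈ T, 1 ≤ p x ∧ p x ≤ (j:ℝ) + 1 := fun x hx =>
    ⟨hj1.trans (hTsub hx).2.1, (hTsub hx).2.2⟩
  obtain ⟨c, hc, hint⟩ := aux_exists_c volume T hTmeas hTpos hTfin p hpm ((j:ℝ)+1) hqB ε hε0 hε1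
  exact ⟨j, T, c, (le_max_left m 1).trans hj, hTmeas, fun x hx => (hTsub hx).1,
    fun x hx => ⟨(hTsub hx).2.1, (hTsub hx).2.2⟩, hc, hint⟩

/-- modular of a scaled indicator -/
theorem aux_indicator {n : ℕ} (Ω : Set (EuclideanSpace ℝ (Fin n))) (hΩ : IsOpen Ω)
    (p : EuclideanSpace ℝ (Fin n) → ℝ) (hp1 : ∀ x ∈ Ω, 1 ≤ p x)
    (T : Set (EuclideanSpace ℝ (Fin n))) (hT : MeasurableSet T) (hTΩ : T ⊆ Ω) (b : ℝ) :
    lpModular Ω p (T.indicator fun _ => b) = ∫⁻ x in T, ENNReal.ofReal (|b| ^ p x) := by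
  unfold lpModular
  have hcong : ∀ x ∈ Ω, ENNReal.ofReal (|T.indicator (fun _ => b) x| ^ p x)
      = T.indicator (fun x => ENNReal.ofReal (|b| ^ p x)) x := by
    intro x hx
    by_cases hxT : x ∈ T
    · simp [indicator_of_mem hxT]
    · have hpx : p x ≠ 0 := (lt_of_lt_of_le one_pos (hp1 x hx)).ne'
      simp [indicator_of_notMem hxT, Real.zero_rpow hpx]
  calc ∫⁻ x in Ω, ENNReal.ofReal (|T.indicator (fun _ => b) x| ^ p x)
      = ∫⁻ x in Ω, T.indicator (fun x => ENNReal.ofReal (|b| ^ p x)) x :=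
        setLIntegral_congr_fun hΩ.measurableSet hcong
    _ = ∫⁻ x in T ∩ Ω, ENNReal.ofReal (|b| ^ p x) := by
        rw [lintegral_indicator hT, Measure.restrict_restrict hT]
    _ = ∫⁻ x in T, ENNReal.ofReal (|b| ^ p x) := by
        rw [Set.inter_eq_self_of_subset_left hTΩ]

/-- Scaling comparison under an essential bound on `p`. -/
theorem aux_smul_le {n : ℕ} (Ω : Set (EuclideanSpace ℝ (Fin n))) (hΩ : IsOpen Ω)
    (p : EuclideanSpace ℝ (Fin n) → ℝ) (hp1 : ∀ x ∈ Ω, 1 ≤ p x) {M : ℝ}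
    (hM : ∀ᵐ x ∂(volume.restrict Ω), p x ≤ M) (s l : ℝ) (hl : 0 < l)
    (u : EuclideanSpace ℝ (Fin n) → ℝ) :
    lpModular Ω p (s • u) ≤
      ENNReal.ofReal (max ((|s|/l) ^ (max M 1)) 1) * lpModular Ω p (l • u) := by
  set a : ℝ := |s| / l with ha
  have ha0 : 0 ≤ a := by positivity
  set K : ℝ := max (a ^ (max M 1)) 1 with hK
  unfold lpModular
  simp only [Pi.smul_apply, smul_eq_mul]
  rw [← lintegral_const_mul' _ _ ENNReal.ofReal_ne_top]
  refine lintegral_mono_ae ?_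
  filter_upwards [hM, ae_restrict_mem hΩ.measurableSet] with x hxM hxΩ
  have hp0 : 0 ≤ p x := le_trans zero_le_one (hp1 x hxΩ)
  have habs : |s * u x| = a * |l * u x| := by
    rw [abs_mul, abs_mul, ha, abs_of_pos hl]
    field_simp
  have hKa : a ^ p x ≤ K := by
    rcases le_or_gt 1 a with h1 | h1
    · exact le_max_of_le_left (Real.rpow_le_rpow_of_exponent_le h1
        (le_trans hxM (le_max_left M 1)))
    · exact le_max_of_le_right (Real.rpow_le_one ha0 h1.le hp0)
  have hK0 : 0 ≤ K := le_trans zero_le_one (le_max_right _ _)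
  show ENNReal.ofReal (|s * u x| ^ p x) ≤ _
  calc ENNReal.ofReal (|s * u x| ^ p x)
      = ENNReal.ofReal (a ^ p x * |l * u x| ^ p x) := by
        rw [habs, Real.mul_rpow ha0 (abs_nonneg _)]
    _ ≤ ENNReal.ofReal (K * |l * u x| ^ p x) := by
        refine ENNReal.ofReal_le_ofReal (mul_le_mul_of_nonneg_right hKa ?_)
        positivity
    _ = ENNReal.ofReal K * ENNReal.ofReal (|l * u x| ^ p x) := by
        rw [ENNReal.ofReal_mul hK0]

example {n : ℕ} (Ω : Set (EuclideanSpace ℝ (Fin n))) (hΩ : IsOpen Ω)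
    (p : EuclideanSpace ℝ (Fin n) → ℝ) (hp1 : ∀ x ∈ Ω, 1 ≤ p x) {M : ℝ}
    (hM : ∀ᵐ x ∂(volume.restrict Ω), p x ≤ M) :
      (∀ u : ℕ → EuclideanSpace ℝ (Fin n) → ℝ, (∀ k, Measurable (u k)) →
        Tendsto (fun k => lpModular Ω p (u k)) atTop (nhds 0) →
        Tendsto (fun k => lpModular Ω p ((2 : ℝ) • u k)) atTop (nhds 0)) := by
  intro u hmeas htend
  set K : ℝ≥0∞ := ENNReal.ofReal (max ((|2|/1) ^ (max M 1)) 1) with hKdef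
  have hle : ∀ k, lpModular Ω p ((2:ℝ) • u k) ≤ K * lpModular Ω p (u k) := by
    intro k
    have := aux_smul_le Ω hΩ p hp1 hM 2 1 one_pos (u k)
    rwa [one_smul] at this
  have hKt : Tendsto (fun k => K * lpModular Ω p (u k)) atTop (nhds 0) := by
    have := ENNReal.Tendsto.const_mul (a := K) htend (Or.inr ENNReal.ofReal_ne_top)
    simpa using this
  exact tendsto_of_tendsto_of_tendsto_of_le_of_le tendsto_const_nhds hKt
    (fun k => zero_le) hle

theorem aux_right_cont {n : ℕ} (Ω : Set (EuclideanSpace ℝ (Fin n))) (hΩ : IsOpen Ω)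
    (p : EuclideanSpace ℝ (Fin n) → ℝ) (hpm : Measurable p) (hp1 : ∀ x ∈ Ω, 1 ≤ p x)
    {M : ℝ} (hM : ∀ᵐ x ∂(volume.restrict Ω), p x ≤ M)
    (u : EuclideanSpace ℝ (Fin n) → ℝ) (hu : Measurable u)
    (humem : u ∈ modularSet (lpModular Ω p)) (l₀ : ℝ) (hl₀ : 0 < l₀) :
    Tendsto (fun l : ℝ => lpModular Ω p (l • u)) (nhdsWithin l₀ (Set.Ioi l₀))
      (nhds (lpModular Ω p (l₀ • u))) := by
  obtain ⟨l, hl, hlt⟩ := humem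
  have hfin : ∀ s : ℝ, lpModular Ω p (s • u) ≠ ⊤ := fun s =>
    (lt_of_le_of_lt (aux_smul_le Ω hΩ p hp1 hM s l hl u)
      (lt_top_iff_ne_top.2 (ENNReal.mul_ne_top ENNReal.ofReal_ne_top hlt.ne))).ne
  have hrw : ∀ s : ℝ, lpModular Ω p (s • u)
      = ∫⁻ x in Ω, ENNReal.ofReal (|s * u x| ^ p x) := by
    intro s; unfold lpModular; simp only [Pi.smul_apply, smul_eq_mul]
  simp only [hrw]
  refine MeasureTheory.tendsto_lintegral_filter_of_dominated_convergence
    (fun x => ENNReal.ofReal (|(l₀ + 1) * u x| ^ p x))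
    (Eventually.of_forall fun s => ((measurable_const.mul hu).abs.pow hpm).ennreal_ofReal)
    ?_ ?_ ?_
  · filter_upwards [Ioo_mem_nhdsGT_of_mem ⟨le_refl l₀, lt_add_one l₀⟩] with s hs
    filter_upwards [ae_restrict_mem hΩ.measurableSet] with x hx
    refine ENNReal.ofReal_le_ofReal (Real.rpow_le_rpow (abs_nonneg _) ?_
      (le_trans zero_le_one (hp1 x hx)))
    rw [abs_mul, abs_mul]
    refine mul_le_mul_of_nonneg_right ?_ (abs_nonneg _)
    rw [abs_of_pos (lt_trans hl₀ hs.1), abs_of_pos (by linarith)]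
    exact hs.2.le
  · rw [← hrw]; exact hfin (l₀ + 1)
  · filter_upwards [ae_restrict_mem hΩ.measurableSet] with x hx
    have h1 : ContinuousAt (fun s : ℝ => |s * u x|) l₀ :=
      (continuous_abs.comp (continuous_id.mul continuous_const)).continuousAt
    have h23 : ContinuousAt (fun s : ℝ => |s * u x| ^ p x) l₀ :=
      h1.rpow_const (Or.inr (le_trans zero_le_one (hp1 x hx)))
    have h3 : Tendsto (fun s : ℝ => ENNReal.ofReal (|s * u x| ^ p x)) (nhds l₀)
        (nhds (ENNReal.ofReal (|l₀ * u x| ^ p x))) :=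
      (ENNReal.continuous_ofReal.tendsto _).comp h23
    exact h3.mono_left nhdsWithin_le_nhds

/-- Δ₂ fails when `p` is essentially unbounded. -/
theorem aux_delta2_fails {n : ℕ} (Ω : Set (EuclideanSpace ℝ (Fin n))) (hΩ : IsOpen Ω)
    (p : EuclideanSpace ℝ (Fin n) → ℝ) (hpm : Measurable p) (hp1 : ∀ x ∈ Ω, 1 ≤ p x)
    (hub : ¬ ∃ M : ℝ, ∀ᵐ x ∂(volume.restrict Ω), p x ≤ M)
    (hΔ : ∀ u : ℕ → EuclideanSpace ℝ (Fin n) → ℝ, (∀ k, Measurable (u k)) →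
        Tendsto (fun k => lpModular Ω p (u k)) atTop (nhds 0) →
        Tendsto (fun k => lpModular Ω p ((2 : ℝ) • u k)) atTop (nhds 0)) : False := by
  have hgood : ∀ k : ℕ, ∃ (j : ℕ) (T : Set (EuclideanSpace ℝ (Fin n))) (c : ℝ),
      k ≤ j ∧ MeasurableSet T ∧ T ⊆ Ω ∧
      (∀ x ∈ T, (j : ℝ) ≤ p x ∧ p x ≤ (j : ℝ) + 1) ∧ 0 < c ∧
      ∫⁻ x in T, ENNReal.ofReal (c ^ p x) = 1 :=
    fun k => aux_good Ω hΩ p hpm hub k 1 one_pos le_rfl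
  choose j T c hjk hTmeas hTsub hslab hc hint using hgood
  set u : ℕ → EuclideanSpace ℝ (Fin n) → ℝ :=
    fun k => (T k).indicator (fun _ => c k / 2) with hudef
  have humeas : ∀ k, Measurable (u k) := fun k => measurable_const.indicator (hTmeas k)
  -- ρ(2 u k) = 1
  have h2 : ∀ k, lpModular Ω p ((2:ℝ) • u k) = 1 := by
    intro k
    have heq : (2:ℝ) • u k = (T k).indicator (fun _ => c k) := by
      funext x
      by_cases hx : x ∈ T k <;>
        simp [hudef, indicator_of_mem, indicator_of_notMem, hx, mul_div_cancel₀]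
    rw [heq, aux_indicator Ω hΩ p hp1 (T k) (hTmeas k) (hTsub k),
      show |c k| = c k from abs_of_pos (hc k)]
    · exact hint k
  -- ρ(u k) ≤ ofReal (2⁻¹ ^ k)
  have h1 : ∀ k, lpModular Ω p (u k) ≤ ENNReal.ofReal ((2:ℝ)⁻¹ ^ k) := by
    intro k
    rw [hudef]
    rw [aux_indicator Ω hΩ p hp1 (T k) (hTmeas k) (hTsub k)]
    have hb : ∀ᵐ x ∂(volume.restrict (T k)),
        ENNReal.ofReal (|c k / 2| ^ p x)
          ≤ ENNReal.ofReal ((2:ℝ)⁻¹ ^ ((j k : ℝ))) * ENNReal.ofReal (c k ^ p x) := by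
      filter_upwards [ae_restrict_mem (hTmeas k)] with x hx
      have hpx0 : (0:ℝ) ≤ p x := le_trans (Nat.cast_nonneg (j k)) (hslab k x hx).1
      have habs : |c k / 2| = c k * 2⁻¹ := by
        rw [abs_of_pos (div_pos (hc k) two_pos)]; ring
      rw [habs, Real.mul_rpow (hc k).le (by norm_num),
        ← ENNReal.ofReal_mul (Real.rpow_nonneg (by norm_num) _)]
      refine ENNReal.ofReal_le_ofReal ?_
      have h2le : ((2:ℝ)⁻¹) ^ p x ≤ (2⁻¹ : ℝ) ^ ((j k : ℝ)) :=
        Real.rpow_le_rpow_of_exponent_ge (by norm_num) (by norm_num) (hslab k x hx).1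
      calc c k ^ p x * 2⁻¹ ^ p x ≤ c k ^ p x * 2⁻¹ ^ ((j k:ℝ)) :=
            mul_le_mul_of_nonneg_left h2le (Real.rpow_nonneg (hc k).le _)
        _ = 2⁻¹ ^ ((j k:ℝ)) * c k ^ p x := mul_comm _ _
    calc ∫⁻ x in T k, ENNReal.ofReal (|c k / 2| ^ p x)
        ≤ ∫⁻ x in T k, ENNReal.ofReal ((2:ℝ)⁻¹ ^ ((j k : ℝ)))
            * ENNReal.ofReal (c k ^ p x) := lintegral_mono_ae hb
      _ = ENNReal.ofReal ((2:ℝ)⁻¹ ^ ((j k : ℝ))) * ∫⁻ x in T k, ENNReal.ofReal (c k ^ p x) :=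
          lintegral_const_mul' _ _ ENNReal.ofReal_ne_top
      _ = ENNReal.ofReal ((2:ℝ)⁻¹ ^ ((j k : ℝ))) := by rw [hint k, mul_one]
      _ ≤ ENNReal.ofReal ((2:ℝ)⁻¹ ^ k) := by
          rw [Real.rpow_natCast]
          exact ENNReal.ofReal_le_ofReal
            (pow_le_pow_of_le_one (by norm_num) (by norm_num) (hjk k))
  -- ρ(u k) → 0
  have htend0 : Tendsto (fun k => lpModular Ω p (u k)) atTop (nhds 0) := by
    have hr : Tendsto (fun k : ℕ => ENNReal.ofReal ((2:ℝ)⁻¹ ^ k)) atTop (nhds 0) := by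
      have : Tendsto (fun k : ℕ => ((2:ℝ)⁻¹) ^ k) atTop (nhds 0) :=
        tendsto_pow_atTop_nhds_zero_of_lt_one (by norm_num) (by norm_num)
      have := (ENNReal.continuous_ofReal.tendsto 0).comp this
      simpa [Function.comp_def] using this
    exact tendsto_of_tendsto_of_tendsto_of_le_of_le tendsto_const_nhds hr
      (fun k => zero_le) h1
  have := hΔ u humeas htend0
  rw [show (fun k => lpModular Ω p ((2:ℝ) • u k)) = fun _ => (1:ℝ≥0∞) from funext h2] at this
  exact one_ne_zero (tendsto_nhds_unique tendsto_const_nhds this)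

theorem aux_right_cont_fails {n : ℕ} (Ω : Set (EuclideanSpace ℝ (Fin n))) (hΩ : IsOpen Ω)
    (p : EuclideanSpace ℝ (Fin n) → ℝ) (hpm : Measurable p) (hp1 : ∀ x ∈ Ω, 1 ≤ p x)
    (hub : ¬ ∃ M : ℝ, ∀ᵐ x ∂(volume.restrict Ω), p x ≤ M)
    (hrc : ∀ u : EuclideanSpace ℝ (Fin n) → ℝ, Measurable u →
        u ∈ modularSet (lpModular Ω p) → ∀ l₀ : ℝ, 0 < l₀ →
          Tendsto (fun l : ℝ => lpModular Ω p (l • u)) (nhdsWithin l₀ (Set.Ioi l₀))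
            (nhds (lpModular Ω p (l₀ • u)))) : False := by
  -- abbreviation for the property
  set P : ℕ → ℕ → Prop := fun k jv => ∃ (T : Set (EuclideanSpace ℝ (Fin n))) (c : ℝ),
      MeasurableSet T ∧ T ⊆ Ω ∧
      (∀ x ∈ T, (jv : ℝ) ≤ p x ∧ p x ≤ (jv : ℝ) + 1) ∧ 0 < c ∧
      ∫⁻ x in T, ENNReal.ofReal (c ^ p x) = ENNReal.ofReal ((2:ℝ)⁻¹ ^ k) with hP
  have good' : ∀ m k : ℕ, ∃ jv : ℕ, m ≤ jv ∧ P k jv := by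
    intro m k
    obtain ⟨jv, T, c, hm, h1, h2, h3, h4, h5⟩ := aux_good Ω hΩ p hpm hub m
      (ENNReal.ofReal ((2:ℝ)⁻¹ ^ k)) (ENNReal.ofReal_pos.2 (by positivity))
      (by rw [show (1:ℝ≥0∞) = ENNReal.ofReal 1 from ENNReal.ofReal_one.symm];
          exact ENNReal.ofReal_le_ofReal (pow_le_one₀ (by norm_num) (by norm_num)))
    exact ⟨jv, hm, T, c, h1, h2, h3, h4, h5⟩
  -- recursively chosen exponents
  set J : ℕ → ℕ := fun k => Nat.rec (good' 0 0).choose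
    (fun k jk => (good' (max ((k+1)^2) (jk + 2)) (k+1)).choose) k with hJ
  have hJP : ∀ k, P k (J k) := by
    intro k
    cases k with
    | zero => exact (good' 0 0).choose_spec.2
    | succ k => exact (good' (max ((k+1)^2) (J k + 2)) (k+1)).choose_spec.2
  have hJsq : ∀ k, k^2 ≤ J k := by
    intro k
    cases k with
    | zero => exact Nat.zero_le _
    | succ k =>
      exact le_trans (le_max_left _ _) (good' (max ((k+1)^2) (J k + 2)) (k+1)).choose_spec.1
  have hJstep : ∀ k, J k + 2 ≤ J (k+1) := fun k =>
    le_trans (le_max_right _ _) (good' (max ((k+1)^2) (J k + 2)) (k+1)).choose_spec.1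
  have hJmono : Monotone J := monotone_nat_of_le_succ fun k => by linarith [hJstep k]
  have hJsep : ∀ {k k'}, k < k' → J k + 2 ≤ J k' := by
    intro k k' hkk
    exact le_trans (hJstep k) (hJmono hkk)
  choose T c hTmeas hTsub hslab hc hint using hJP
  -- disjointness
  have hdisj : ∀ {k k'}, k ≠ k' → ∀ x, x ∈ T k → x ∈ T k' → False := by
    have key : ∀ {k k'}, k < k' → ∀ x, x ∈ T k → x ∈ T k' → False := by
      intro k k' hkk x hx hx'
      have h1 := (hslab k x hx).2
      have h2 := (hslab k' x hx').1
      have h3 : (J k : ℝ) + 2 ≤ (J k' : ℝ) := by exact_mod_cast hJsep hkk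
      linarith
    intro k k' hkk x hx hx'
    rcases hkk.lt_or_gt with h | h
    · exact key h x hx hx'
    · exact key h x hx' hx
  -- the function u
  set v : EuclideanSpace ℝ (Fin n) → ℝ≥0∞ :=
    fun x => ∑' k, (T k).indicator (fun _ => ENNReal.ofReal (c k)) x with hv
  set u : EuclideanSpace ℝ (Fin n) → ℝ := fun x => (v x).toReal with hu
  have hvmeas : Measurable v :=
    Measurable.ennreal_tsum fun k => measurable_const.indicator (hTmeas k)
  have humeas : Measurable u := hvmeas.ennreal_toReal
  have hu_on : ∀ k, ∀ x ∈ T k, u x = c k := by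
    intro k x hx
    have : v x = ENNReal.ofReal (c k) := by
      simp only [hv]
      rw [tsum_eq_single k]
      · simp [indicator_of_mem hx]
      · intro i hik
        exact indicator_of_notMem (fun hxi => hdisj hik x hxi hx) _
    simp only [hu, this]
    exact ENNReal.toReal_ofReal (hc k).le
  have hu_off : ∀ x, (∀ k, x ∉ T k) → u x = 0 := by
    intro x hx
    have : v x = 0 := by
      simp only [hv]
      rw [ENNReal.tsum_eq_zero]
      intro i; exact indicator_of_notMem (hx i) _
    simp [hu, this]
  -- modular at scale l
  have hmod_eq : ∀ s : ℝ, lpModular Ω p (s • u)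
      = ∫⁻ x in Ω, ENNReal.ofReal (|s * u x| ^ p x) := by
    intro s; unfold lpModular; simp only [Pi.smul_apply, smul_eq_mul]
  -- finiteness of ρ(u)
  have hfin : lpModular Ω p ((1:ℝ) • u) ≠ ⊤ := by
    rw [hmod_eq]
    have hptwise : ∀ x ∈ Ω, ENNReal.ofReal (|1 * u x| ^ p x)
        ≤ ∑' k, (T k).indicator (fun y => ENNReal.ofReal (c k ^ p y)) x := by
      intro x hx
      by_cases hex : ∃ k, x ∈ T k
      · obtain ⟨k, hk⟩ := hex
        have : ENNReal.ofReal (|1 * u x| ^ p x)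
            = (T k).indicator (fun y => ENNReal.ofReal (c k ^ p y)) x := by
          rw [one_mul, hu_on k x hk, abs_of_pos (hc k), indicator_of_mem hk]
        rw [this]
        exact ENNReal.le_tsum k
      · push_neg at hex
        rw [one_mul, hu_off x hex, abs_zero,
          Real.zero_rpow (lt_of_lt_of_le one_pos (hp1 x hx)).ne']
        simp
    have hle : ∫⁻ x in Ω, ENNReal.ofReal (|1 * u x| ^ p x)
        ≤ ∑' k, (ENNReal.ofReal 2⁻¹) ^ k := by
      calc ∫⁻ x in Ω, ENNReal.ofReal (|1 * u x| ^ p x)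
        ≤ ∫⁻ x in Ω, ∑' k, (T k).indicator (fun y => ENNReal.ofReal (c k ^ p y)) x :=
          lintegral_mono_ae (by
            filter_upwards [ae_restrict_mem hΩ.measurableSet] with x hx
            exact hptwise x hx)
      _ = ∑' k, ∫⁻ x in Ω, (T k).indicator (fun y => ENNReal.ofReal (c k ^ p y)) x :=
          lintegral_tsum fun k =>
            (((measurable_const.pow hpm).ennreal_ofReal).indicator (hTmeas k)).aemeasurable
      _ = ∑' k, ∫⁻ x in T k, ENNReal.ofReal (c k ^ p x) := by
          refine tsum_congr fun k => ?_
          rw [lintegral_indicator (hTmeas k), Measure.restrict_restrict (hTmeas k),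
            Set.inter_eq_self_of_subset_left (hTsub k)]
      _ = ∑' k, ENNReal.ofReal ((2:ℝ)⁻¹ ^ k) := tsum_congr fun k => hint k
      _ = ∑' k, (ENNReal.ofReal 2⁻¹) ^ k := by
          refine tsum_congr fun k => ?_
          rw [ENNReal.ofReal_pow (by norm_num)]
    refine ne_top_of_le_ne_top ?_ hle
    rw [ENNReal.tsum_geometric]
    refine ENNReal.inv_ne_top.2 ?_
    rw [Ne, tsub_eq_zero_iff_le, not_le]
    exact ENNReal.ofReal_lt_one.2 (by norm_num)
  -- lower bound
  have hlow : ∀ l : ℝ, 1 ≤ l → ∀ k,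
      ENNReal.ofReal (l ^ (J k : ℝ) * (2:ℝ)⁻¹ ^ k) ≤ lpModular Ω p (l • u) := by
    intro l hl k
    rw [hmod_eq]
    have hres : ∫⁻ x in T k, ENNReal.ofReal (|l * u x| ^ p x)
        ≤ ∫⁻ x in Ω, ENNReal.ofReal (|l * u x| ^ p x) :=
      lintegral_mono' (Measure.restrict_mono (hTsub k) le_rfl) le_rfl
    refine le_trans ?_ hres
    have hcong : ∀ᵐ x ∂(volume.restrict (T k)),
        ENNReal.ofReal (l ^ (J k : ℝ)) * ENNReal.ofReal (c k ^ p x)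
          ≤ ENNReal.ofReal (|l * u x| ^ p x) := by
      filter_upwards [ae_restrict_mem (hTmeas k)] with x hx
      rw [hu_on k x hx, abs_of_pos (mul_pos (lt_of_lt_of_le one_pos hl) (hc k)),
        Real.mul_rpow (by linarith) (hc k).le,
        ← ENNReal.ofReal_mul (Real.rpow_nonneg (by linarith) _)]
      refine ENNReal.ofReal_le_ofReal (mul_le_mul_of_nonneg_right ?_
        (Real.rpow_nonneg (hc k).le _))
      exact Real.rpow_le_rpow_of_exponent_le hl (hslab k x hx).1
    calc ENNReal.ofReal (l ^ (J k : ℝ) * (2:ℝ)⁻¹ ^ k)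
        = ENNReal.ofReal (l ^ (J k : ℝ)) * ENNReal.ofReal ((2:ℝ)⁻¹ ^ k) := by
          rw [← ENNReal.ofReal_mul (Real.rpow_nonneg (by linarith) _)]
      _ = ENNReal.ofReal (l ^ (J k : ℝ)) * ∫⁻ x in T k, ENNReal.ofReal (c k ^ p x) := by
          rw [hint k]
      _ = ∫⁻ x in T k, ENNReal.ofReal (l ^ (J k : ℝ)) * ENNReal.ofReal (c k ^ p x) :=
          (lintegral_const_mul' _ _ ENNReal.ofReal_ne_top).symm
      _ ≤ ∫⁻ x in T k, ENNReal.ofReal (|l * u x| ^ p x) := lintegral_mono_ae hcong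
  -- for l > 1 the modular is infinite
  have htop : ∀ l : ℝ, 1 < l → lpModular Ω p (l • u) = ⊤ := by
    intro l hl
    refine ENNReal.eq_top_of_forall_nnreal_le fun r => ?_
    obtain ⟨K₁, hK₁⟩ := pow_unbounded_of_one_lt (4:ℝ) hl
    obtain ⟨K₂, hK₂⟩ := pow_unbounded_of_one_lt (r:ℝ) (one_lt_two)
    set k := max K₁ K₂ with hk
    have hl0 : (1:ℝ) ≤ l := hl.le
    have h4 : (4:ℝ) ≤ l ^ k := by
      calc (4:ℝ) ≤ l ^ K₁ := hK₁.le
        _ ≤ l ^ k := pow_le_pow_right₀ hl0 (le_max_left _ _)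
    have hr2 : (r:ℝ) ≤ 2 ^ k := by
      calc (r:ℝ) ≤ 2 ^ K₂ := hK₂.le
        _ ≤ 2 ^ k := pow_le_pow_right₀ one_le_two (le_max_right _ _)
    have hchain : (r:ℝ) ≤ l ^ (J k : ℝ) * (2:ℝ)⁻¹ ^ k := by
      have h1 : ((l ^ k) ^ k : ℝ) ≤ l ^ (J k : ℝ) := by
        have he : l ^ ((k^2 : ℕ) : ℝ) = ((l ^ k) ^ k : ℝ) := by
          rw [Real.rpow_natCast, pow_two, pow_mul]
        rw [← he]
        exact Real.rpow_le_rpow_of_exponent_le hl0 (by exact_mod_cast hJsq k)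
      have h2 : (4:ℝ)^k ≤ (l^k)^k := pow_le_pow_left₀ (by norm_num) h4 k
      have h3 : (2:ℝ)^k = 4^k * 2⁻¹^k := by rw [← mul_pow]; norm_num
      have h5 : (0:ℝ) ≤ (2:ℝ)⁻¹^k := by positivity
      calc (r:ℝ) ≤ 2^k := hr2
        _ = 4^k * 2⁻¹^k := h3
        _ ≤ (l^k)^k * 2⁻¹^k := mul_le_mul_of_nonneg_right h2 h5
        _ ≤ l ^ (J k:ℝ) * 2⁻¹^k := mul_le_mul_of_nonneg_right h1 h5
    calc (r : ℝ≥0∞) = ENNReal.ofReal (r : ℝ) := ENNReal.ofReal_coe_nnreal.symm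
      _ ≤ ENNReal.ofReal (l ^ (J k : ℝ) * (2:ℝ)⁻¹ ^ k) := ENNReal.ofReal_le_ofReal hchain
      _ ≤ lpModular Ω p (l • u) := hlow l hl0 k
  -- contradiction with right-continuity at 1
  have humem : u ∈ modularSet (lpModular Ω p) :=
    ⟨1, one_pos, lt_top_iff_ne_top.2 hfin⟩
  have htend := hrc u humeas humem 1 one_pos
  have heq : (fun l : ℝ => lpModular Ω p (l • u)) =ᶠ[nhdsWithin 1 (Set.Ioi 1)]
      (fun _ => (⊤ : ℝ≥0∞)) := by
    filter_upwards [self_mem_nhdsWithin] with l hl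
    exact htop l hl
  have htop' : Tendsto (fun _ : ℝ => (⊤ : ℝ≥0∞)) (nhdsWithin 1 (Set.Ioi 1))
      (nhds (lpModular Ω p ((1:ℝ) • u))) := htend.congr' heq
  exact hfin (tendsto_nhds_unique htop' tendsto_const_nhds)

/-- For an open `Ω ⊆ ℝ^n` and Borel measurable `p : Ω → [1,∞)` the following are equivalent:
(i) `ρ_p` is right-continuous on `L^{p(·)}(Ω)`;
(ii) the essential supremum of `p` over `Ω` is finite;
(iii) `ρ_p` satisfies the `Δ₂`-property. -/
theorem lpModular_right_continuous_iff_essSup_finite_iff_delta2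
    {n : ℕ} (Ω : Set (EuclideanSpace ℝ (Fin n))) (hΩ : IsOpen Ω)
    (p : EuclideanSpace ℝ (Fin n) → ℝ) (hpm : Measurable p) (hp1 : ∀ x ∈ Ω, 1 ≤ p x) :
    ((∀ u : EuclideanSpace ℝ (Fin n) → ℝ, Measurable u → u ∈ modularSet (lpModular Ω p) →
        ∀ l₀ : ℝ, 0 < l₀ →
          Tendsto (fun l : ℝ => lpModular Ω p (l • u)) (nhdsWithin l₀ (Set.Ioi l₀))
            (nhds (lpModular Ω p (l₀ • u)))) ↔
      (∃ M : ℝ, ∀ᵐ x ∂(volume.restrict Ω), p x ≤ M)) ∧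
    ((∃ M : ℝ, ∀ᵐ x ∂(volume.restrict Ω), p x ≤ M) ↔
      (∀ u : ℕ → EuclideanSpace ℝ (Fin n) → ℝ, (∀ k, Measurable (u k)) →
        Tendsto (fun k => lpModular Ω p (u k)) atTop (nhds 0) →
        Tendsto (fun k => lpModular Ω p ((2 : ℝ) • u k)) atTop (nhds 0))) := by
  constructor
  · constructor
    · intro hrc
      by_contra hub
      exact aux_right_cont_fails Ω hΩ p hpm hp1 hub hrc
    · rintro ⟨M, hM⟩ u hu humem l₀ hl₀
      exact aux_right_cont Ω hΩ p hpm hp1 hM u hu humem l₀ hl₀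
  · constructor
    · rintro ⟨M, hM⟩ u hmeas htend
      set K : ℝ≥0∞ := ENNReal.ofReal (max ((|2|/1) ^ (max M 1)) 1) with hKdef
      have hle : ∀ k, lpModular Ω p ((2:ℝ) • u k) ≤ K * lpModular Ω p (u k) := by
        intro k
        have := aux_smul_le Ω hΩ p hp1 hM 2 1 one_pos (u k)
        rwa [one_smul] at this
      have hKt : Tendsto (fun k => K * lpModular Ω p (u k)) atTop (nhds 0) := by
        have := ENNReal.Tendsto.const_mul (a := K) htend (Or.inr ENNReal.ofReal_ne_top)
        simpa using this
      exact tendsto_of_tendsto_of_tendsto_of_le_of_le tendsto_const_nhds hKt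
        (fun k => zero_le) hle
    · intro hΔ
      by_contra hub
      exact aux_delta2_fails Ω hΩ p hpm hp1 hub hΔ
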